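/- For d ≥ 3, the black node W fails the bialgebra law: W ∘ W† ≠ (W† ⊗ W†) ∘ (id ⊗ σ ⊗ id) ∘ (W ⊗ W) as linear maps ℂ^d⊗ℂ^d → ℂ^d⊗ℂ^d. -/

import Mathlib

open TensorProduct

/-- For `d ≥ 3`, the black node fails the bialgebra law:
`W ∘ W† ≠ (W† ⊗ W†) ∘ (id ⊗ σ ⊗ id) ∘ (W ⊗ W)`. -/
theorem black_no_bialgebra (n : ℕ)
    (W : (Fin (n+3) → ℂ) →ₗ[ℂ] (Fin (n+3) → ℂ) ⊗[ℂ] (Fin (n+3) → ℂ))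
    (Wd : (Fin (n+3) → ℂ) ⊗[ℂ] (Fin (n+3) → ℂ) →ₗ[ℂ] (Fin (n+3) → ℂ))
    (hW0 : W (Pi.single 0 1) = (Pi.single 0 1 : Fin (n+3) → ℂ) ⊗ₜ[ℂ] (Pi.single 0 1 : Fin (n+3) → ℂ))
    (hWi : ∀ i : Fin (n+3), i ≠ 0 →
      W (Pi.single i 1) = (Pi.single 0 1 : Fin (n+3) → ℂ) ⊗ₜ[ℂ] (Pi.single i 1 : Fin (n+3) → ℂ)
        + (Pi.single i 1 : Fin (n+3) → ℂ) ⊗ₜ[ℂ] (Pi.single 0 1 : Fin (n+3) → ℂ))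
    (hWd : ∀ j k : Fin (n+3),
      Wd ((Pi.single j 1 : Fin (n+3) → ℂ) ⊗ₜ[ℂ] (Pi.single k 1 : Fin (n+3) → ℂ))
        = if j = 0 then (Pi.single k 1 : Fin (n+3) → ℂ)
          else if k = 0 then (Pi.single j 1 : Fin (n+3) → ℂ) else 0) :
    W ∘ₗ Wd
      ≠ (TensorProduct.map Wd Wd)
          ∘ₗ (TensorProduct.tensorTensorTensorComm ℂ (Fin (n+3) → ℂ) (Fin (n+3) → ℂ)
                (Fin (n+3) → ℂ) (Fin (n+3) → ℂ)).toLinearMap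
          ∘ₗ (TensorProduct.map W W) := by
  intro h
  have h1 : (1 : Fin (n+3)) ≠ 0 := by
    apply Fin.ne_of_val_ne
    simp [Fin.val_one]
  have h2 : (2 : Fin (n+3)) ≠ 0 := by
    apply Fin.ne_of_val_ne
    simp [Fin.val_two, Nat.mod_eq_of_lt (show 2 < n+3 by omega)]
  have h12 : (1 : Fin (n+3)) ≠ 2 := by
    apply Fin.ne_of_val_ne
    simp [Fin.val_one, Fin.val_two, Nat.mod_eq_of_lt (show 2 < n+3 by omega)]
  have key := LinearMap.congr_fun h
    ((Pi.single 1 1 : Fin (n+3) → ℂ) ⊗ₜ[ℂ] (Pi.single 2 1 : Fin (n+3) → ℂ))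
  simp only [LinearMap.comp_apply, LinearEquiv.coe_coe, TensorProduct.map_tmul,
    hWd, hWi 1 h1, hWi 2 h2, if_neg h1, if_neg h2, map_zero,
    TensorProduct.add_tmul, TensorProduct.tmul_add, map_add,
    TensorProduct.tensorTensorTensorComm_tmul] at key
  -- define a functional that picks out the coefficient of |1⟩⊗|2⟩
  let φ : (Fin (n+3) → ℂ) ⊗[ℂ] (Fin (n+3) → ℂ) →ₗ[ℂ] ℂ :=
    TensorProduct.lift (LinearMap.mk₂ ℂ (fun v w => v 1 * w 2)
      (fun a b c => by simp [add_mul]) (fun a b c => by simp [mul_assoc])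
      (fun a b c => by simp [mul_add]) (fun a b c => by ring_nf; simp [Pi.smul_apply]; ring))
  have := congrArg φ key
  simp only [map_zero, map_add, φ, TensorProduct.lift.tmul, LinearMap.mk₂_apply,
    hWd] at this
  norm_num at this
  simp [Pi.single_apply, h12, (Ne.symm h12)] at this
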